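/- Every closed linear subspace X of C([0,ω₁]) that is isomorphic to c₀ (i.e., there is a continuous linear bijection X → c₀ with continuous inverse) is complemented in C([0,ω₁]): there exists a bounded linear projection of C([0,ω₁]) onto X. -/

import Mathlib

set_option synthInstance.maxHeartbeats 1000000
set_option maxHeartbeats 2000000

noncomputable section
open Set Ordinal

/-- `ω₁`, the first uncountable ordinal. -/
abbrev omega1 : Ordinal.{0} := Ordinal.omega 1

/-- Every ordinal interval `[0, o]` is a compact space in its (inherited) order topology. -/
instance (o : Ordinal) : CompactSpace (Set.Iic o) := by
  have h : IsCompact (Set.Iic o) := by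
    have := isCompact_Icc (a := (⊥ : Ordinal)) (b := o)
    rwa [Set.Icc_bot] at this
  exact isCompact_iff_compactSpace.mp h

/-- The Banach space `C([0, ω₁])` of continuous real-valued functions on `[0, ω₁]`,
with the supremum norm. -/
abbrev CC := C(Set.Iic omega1, ℝ)

/-- Type synonym endowing an arbitrary type with the discrete topology. -/
def DiscType (Γ : Type*) : Type _ := Γ
instance (Γ : Type*) : TopologicalSpace (DiscType Γ) := ⊥
instance (Γ : Type*) : DiscreteTopology (DiscType Γ) := ⟨rfl⟩

/-- `c₀(Γ)`: the Banach space of real-valued functions on `Γ` vanishing at infinity,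
i.e. `{γ : |f γ| ≥ ε}` is finite for every `ε > 0`, with the supremum norm. -/
abbrev czero (Γ : Type*) := ZeroAtInftyContinuousMap (DiscType Γ) ℝ

/-- The set `[0, ω₁)` of countable ordinals, the index set of `c₀(ω₁)`. -/
abbrev Gamma1 : Type 1 := {α : Ordinal.{0} // α < omega1}


open Filter Topology TopologicalSpace

lemma czero_tendsto (f : czero ℕ) : Tendsto (fun n : ℕ => f n) atTop (𝓝 (0:ℝ)) := by
  have h : Tendsto (fun n : DiscType ℕ => f n) (cocompact (DiscType ℕ)) (𝓝 0) :=
    ZeroAtInftyContinuousMapClass.zero_at_infty f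
  rw [cocompact_eq_cofinite] at h
  exact Nat.cofinite_eq_atTop ▸ h

def mkCzero (g : ℕ → ℝ) (hg : Tendsto g atTop (𝓝 (0:ℝ))) : czero ℕ :=
  { toFun := g
    continuous_toFun := continuous_of_discreteTopology
    zero_at_infty' := by
      rw [cocompact_eq_cofinite]
      exact Nat.cofinite_eq_atTop ▸ hg }

@[simp] lemma mkCzero_apply (g : ℕ → ℝ) (hg) (n : ℕ) : mkCzero g hg n = g n := rfl

@[simp] lemma mkCzero_apply' (g : ℕ → ℝ) (hg) (n : DiscType ℕ) : mkCzero g hg n = g n := rfl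

lemma czero_coord_le (f : czero ℕ) (n : ℕ) : |f n| ≤ ‖f‖ := by
  have := BoundedContinuousFunction.norm_coe_le_norm f.toBCF n
  rwa [ZeroAtInftyContinuousMap.norm_toBCF_eq_norm, Real.norm_eq_abs] at this

lemma czero_norm_le (f : czero ℕ) {M : ℝ} (hM : 0 ≤ M) (h : ∀ n : ℕ, |f n| ≤ M) : ‖f‖ ≤ M := by
  rw [← ZeroAtInftyContinuousMap.norm_toBCF_eq_norm]
  exact (BoundedContinuousFunction.norm_le hM).2 (fun x => by simpa [Real.norm_eq_abs] using h x)

/-- evaluation functional on `c₀`. -/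
def evCLM (n : ℕ) : czero ℕ →L[ℝ] ℝ :=
  LinearMap.mkContinuous
    { toFun := fun f => f n
      map_add' := fun f g => by simp; rfl
      map_smul' := fun c f => by simp; rfl }
    1 (fun f => by simpa [Real.norm_eq_abs] using czero_coord_le f n)

@[simp] lemma evCLM_apply (n : ℕ) (f : czero ℕ) : evCLM n f = f n := rfl

lemma norm_evCLM_le (n : ℕ) : ‖evCLM n‖ ≤ 1 :=
  LinearMap.mkContinuous_norm_le _ zero_le_one _

/-- extension by zero of a finitely supported vector -/
def extFin (s : Finset ℕ) (v : s → ℝ) : czero ℕ :=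
  mkCzero (fun n => if h : n ∈ s then v ⟨n, h⟩ else 0) <| by
    have : ∀ᶠ n in atTop, (if h : n ∈ s then v ⟨n, h⟩ else 0) = (0:ℝ) := by
      rcases s.bddAbove with ⟨m, hm⟩
      filter_upwards [eventually_gt_atTop m] with n hn
      exact dif_neg (fun hns => absurd (hm (Finset.mem_coe.2 hns)) (not_le.2 hn))
    exact Tendsto.congr' (EventuallyEq.symm this) tendsto_const_nhds

lemma extFin_lip (s : Finset ℕ) : LipschitzWith 1 (extFin s) := by
  refine LipschitzWith.of_dist_le_mul (fun v w => ?_)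
  rw [dist_eq_norm]
  simp only [NNReal.coe_one, one_mul]
  have h0 : (0:ℝ) ≤ dist v w := dist_nonneg
  refine czero_norm_le _ h0 (fun n => ?_)
  have : (extFin s v - extFin s w) n = extFin s v n - extFin s w n := by
    simp; rfl
  rw [this]
  simp only [extFin, mkCzero_apply]
  by_cases h : n ∈ s
  · rw [dif_pos h, dif_pos h]
    have := dist_le_pi_dist v w ⟨n, h⟩
    rwa [Real.dist_eq] at this
  · simp only [dif_neg h, _root_.sub_zero]
    simpa using h0

instance : SeparableSpace (czero ℕ) := by
  have hA : IsSeparable (⋃ s : Finset ℕ, Set.range (extFin s)) := by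
    refine isSeparable_iUnion.2 (fun s => ?_)
    exact (IsSeparable.of_separableSpace (univ : Set (s → ℝ))).image
      (extFin_lip s).continuous |>.mono (by rw [Set.image_univ])
  have hdense : ∀ f : czero ℕ, f ∈ closure (⋃ s : Finset ℕ, Set.range (extFin s)) := by
    intro f
    rw [Metric.mem_closure_iff]
    intro ε hε
    have := (czero_tendsto f).eventually (Metric.ball_mem_nhds (0:ℝ) (half_pos hε))
    rcases this.exists_forall_of_atTop with ⟨N, hN⟩
    refine ⟨extFin (Finset.range N) (fun i => f i.1), Set.mem_iUnion.2 ⟨_, Set.mem_range_self _⟩, ?_⟩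
    rw [dist_eq_norm]
    have : ‖f - extFin (Finset.range N) (fun i => f i.1)‖ ≤ ε/2 := by
      refine czero_norm_le _ (le_of_lt (half_pos hε)) (fun n => ?_)
      have hco : (f - extFin (Finset.range N) (fun i => f i.1)) n
          = f n - extFin (Finset.range N) (fun i => f i.1) n := by simp; rfl
      rw [hco]
      by_cases h : n ∈ Finset.range N
      · simp only [extFin, mkCzero_apply, dif_pos h]
        simpa using (half_pos hε).le
      · simp only [extFin, mkCzero_apply, dif_neg h]
        rw [_root_.sub_zero]
        have hn : N ≤ n := by simpa using h
        have := hN n hn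
        rw [Real.dist_eq, _root_.sub_zero] at this
        exact le_of_lt this
    linarith
  have : IsSeparable (univ : Set (czero ℕ)) :=
    (hA.closure).mono (fun f _ => hdense f)
  exact isSeparable_univ_iff.1 this

universe u

theorem sobczyk_ext {E : Type u} [NormedAddCommGroup E] [NormedSpace ℝ E]
    [SeparableSpace E] (X : Submodule ℝ E) (T : X ≃L[ℝ] czero ℕ) :
    ∃ Q : E →L[ℝ] czero ℕ, ∀ x : X, Q x = T x := by
  classical
  haveI : Nonempty E := ⟨0⟩
  set Tc : X →L[ℝ] czero ℕ := (T : X →L[ℝ] czero ℕ) with hTc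
  set C : ℝ := ‖Tc‖ + 1 with hCdef
  have hC0 : 0 < C := by positivity
  set xs : ℕ → (X →L[ℝ] ℝ) := fun n => (evCLM n).comp Tc with hxsdef
  have hxs : ∀ n, ‖xs n‖ ≤ C := by
    intro n
    refine le_trans (ContinuousLinearMap.opNorm_comp_le _ _) ?_
    have h1 := norm_evCLM_le n
    have h2 : (0:ℝ) ≤ ‖Tc‖ := ContinuousLinearMap.opNorm_nonneg _
    nlinarith
  have hxs_apply : ∀ (n : ℕ) (x : X), xs n x = (T x) n := by
    intro n x
    simp only [hxsdef, ContinuousLinearMap.comp_apply, evCLM_apply]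
    rfl
  choose f hf hfn using fun n => exists_extension_norm_eq X (xs n)
  have hfC : ∀ n, ‖f n‖ ≤ C := fun n => (hfn n) ▸ hxs n
  set u : ℕ → E := denseSeq E with hudef
  have hu : DenseRange u := denseRange_denseSeq E
  set fw : ℕ → WeakDual ℝ E := fun n => StrongDual.toWeakDual (f n) with hfwdef
  have hfw_apply : ∀ (n : ℕ) (z : E), fw n z = f n z := fun n z => rfl
  set B : Set (WeakDual ℝ E) := WeakDual.toStrongDual ⁻¹' Metric.closedBall 0 C with hBdef
  have hBcpt : IsCompact B := WeakDual.isCompact_closedBall (𝕜 := ℝ) (E := E) 0 C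
  have hfB : ∀ n, fw n ∈ B := by
    intro n
    simp only [hBdef, Set.mem_preimage, Metric.mem_closedBall, dist_zero_right]
    exact hfC n
  set K : Set (WeakDual ℝ E) := {g | g ∈ B ∧ ∀ x : X, g (x : E) = 0} with hKdef
  have hK0 : (0 : WeakDual ℝ E) ∈ K := by
    constructor
    · simp only [hBdef, Set.mem_preimage, Metric.mem_closedBall, dist_zero_right, map_zero]
      simpa using hC0.le
    · intro x; rfl
  set D : WeakDual ℝ E → WeakDual ℝ E → ℝ :=
    fun g h => ∑' k, (1/2:ℝ)^k * min |g (u k) - h (u k)| 1 with hDdef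
  have hterm_nonneg : ∀ (g h : WeakDual ℝ E) (k : ℕ),
      0 ≤ (1/2:ℝ)^k * min |g (u k) - h (u k)| 1 :=
    fun g h k => mul_nonneg (by positivity) (le_min (abs_nonneg _) zero_le_one)
  have hDsummable : ∀ g h : WeakDual ℝ E,
      Summable (fun k => (1/2:ℝ)^k * min |g (u k) - h (u k)| 1) := by
    intro g h
    refine Summable.of_nonneg_of_le (hterm_nonneg g h) (fun k => ?_) summable_geometric_two
    have h1 : min |g (u k) - h (u k)| 1 ≤ 1 := min_le_right _ _
    have h2 : (0:ℝ) < (1/2:ℝ)^k := by positivity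
    nlinarith
  have hDnonneg : ∀ g h, 0 ≤ D g h := fun g h => tsum_nonneg (hterm_nonneg g h)
  have hDself : ∀ g, D g g = 0 := by
    intro g
    simp [hDdef]
  have hDcont : ∀ g : WeakDual ℝ E, Continuous (fun h : WeakDual ℝ E => D h g) := by
    intro g
    refine continuous_tsum (fun k => ?_) summable_geometric_two (fun k h => ?_)
    · have h1 : Continuous fun h : WeakDual ℝ E => h (u k) := WeakDual.eval_continuous (u k)
      exact continuous_const.mul (((h1.sub continuous_const).abs).min continuous_const)
    · rw [Real.norm_eq_abs, abs_of_nonneg (hterm_nonneg _ _ _)]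
      have h1 : min |h (u k) - g (u k)| 1 ≤ 1 := min_le_right _ _
      have h2 : (0:ℝ) < (1/2:ℝ)^k := by positivity
      calc (1/2:ℝ)^k * min |h (u k) - g (u k)| 1 ≤ (1/2:ℝ)^k * 1 := by nlinarith
        _ = (1/2:ℝ)^k := mul_one _
  have hx0 : ∀ x : X, Tendsto (fun n => f n (x:E)) atTop (𝓝 (0:ℝ)) := by
    intro x
    have heq : (fun n => f n (x:E)) = fun n => (T x) n := by
      funext n
      rw [hf n x, hxs_apply]
    rw [heq]
    exact czero_tendsto (T x)
  -- main claim
  have claim : ∀ ε > (0:ℝ), ∀ᶠ n in atTop, ∃ g ∈ K, D (fw n) g < ε := by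
    intro ε hε
    by_contra hcon
    rw [Filter.not_eventually] at hcon
    have hcon' : ∃ᶠ n in atTop, ∀ g ∈ K, ε ≤ D (fw n) g := by
      refine hcon.mono (fun n hn => ?_)
      push_neg at hn
      exact hn
    set S : Set ℕ := {n | ∀ g ∈ K, ε ≤ D (fw n) g} with hSdef
    haveI hL : (atTop ⊓ 𝓟 S).NeBot := by
      rwa [← frequently_iff_neBot]
    have hmap : map fw (atTop ⊓ 𝓟 S) ≤ 𝓟 B := by
      rw [le_principal_iff, mem_map]
      exact univ_mem' (fun n => hfB n)
    obtain ⟨g, hgB, hg⟩ := hBcpt.exists_clusterPt hmap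
    have hgX : ∀ x : X, g (x : E) = 0 := by
      intro x
      have hev : Continuous fun h : WeakDual ℝ E => h (x : E) := WeakDual.eval_continuous _
      have h1 : ClusterPt (g (x:E)) (map (fun h : WeakDual ℝ E => h (x:E)) (map fw (atTop ⊓ 𝓟 S))) :=
        hg.map hev.continuousAt tendsto_map
      have h2 : map (fun h : WeakDual ℝ E => h (x:E)) (map fw (atTop ⊓ 𝓟 S)) ≤ 𝓝 (0:ℝ) := by
        rw [map_map]
        exact ((hx0 x).mono_left inf_le_left : Tendsto (fun n => fw n (x:E)) (atTop ⊓ 𝓟 S) (𝓝 0))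
      haveI h3 : (map (fun h : WeakDual ℝ E => h (x:E)) (map fw (atTop ⊓ 𝓟 S))).NeBot :=
        hL.map _ |>.map _
      have h4 : (𝓝 (g (x:E)) ⊓ 𝓝 (0:ℝ)).NeBot := h1.mono h2
      exact t2_iff_nhds.1 (inferInstance) h4
    have hgK : g ∈ K := ⟨hgB, hgX⟩
    have hU : {h : WeakDual ℝ E | D h g < ε} ∈ 𝓝 g := by
      have hopen : IsOpen {h : WeakDual ℝ E | D h g < ε} :=
        isOpen_lt (hDcont g) continuous_const
      refine hopen.mem_nhds ?_
      show D g g < ε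
      rw [hDself g]; exact hε
    have hV : fw '' S ∈ map fw (atTop ⊓ 𝓟 S) := by
      rw [mem_map]
      exact mem_inf_of_right (by exact fun n hn => Set.mem_image_of_mem fw hn)
    have hne : ({h : WeakDual ℝ E | D h g < ε} ∩ fw '' S).Nonempty := by
      have := hg
      rw [ClusterPt] at this
      exact this.nonempty_of_mem (inter_mem (mem_inf_of_left hU) (mem_inf_of_right hV))
    obtain ⟨_, hlt, n, hnS, rfl⟩ := hne
    exact absurd hlt (not_lt.2 (hnS g hgK))
  -- choose approximating sequence
  have hbdd : ∀ n, BddBelow (Set.range fun g : K => D (fw n) g) := by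
    intro n
    exact ⟨0, fun r ⟨g, hg⟩ => hg ▸ hDnonneg _ _⟩
  haveI : Nonempty K := ⟨⟨0, hK0⟩⟩
  set dinf : ℕ → ℝ := fun n => ⨅ g : K, D (fw n) g with hdinfdef
  have hdinf_nonneg : ∀ n, 0 ≤ dinf n := fun n => le_ciInf fun g => hDnonneg _ _
  have hchoice : ∀ n : ℕ, ∃ g ∈ K, D (fw n) g < dinf n + 1/(n+1) := by
    intro n
    have hlt : dinf n < dinf n + 1/(n+1) := by
      have : (0:ℝ) < 1/(n+1) := by positivity
      linarith
    obtain ⟨⟨g, hg⟩, hglt⟩ := exists_lt_of_ciInf_lt hlt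
    exact ⟨g, hg, hglt⟩
  choose gs hgsK hgs using hchoice
  have hdinf0 : Tendsto dinf atTop (𝓝 0) := by
    rw [tendsto_order]
    constructor
    · intro a ha
      filter_upwards with n
      exact lt_of_lt_of_le ha (hdinf_nonneg n)
    · intro a ha
      filter_upwards [claim a ha] with n hn
      obtain ⟨g, hgK', hD⟩ := hn
      exact lt_of_le_of_lt (ciInf_le (hbdd n) ⟨g, hgK'⟩) hD
  have hDgs0 : Tendsto (fun n => D (fw n) (gs n)) atTop (𝓝 0) := by
    have hupper : Tendsto (fun n : ℕ => dinf n + 1/(n+1)) atTop (𝓝 0) := by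
      have := hdinf0.add tendsto_one_div_add_atTop_nhds_zero_nat
      simpa using this
    exact squeeze_zero (fun n => hDnonneg _ _) (fun n => (hgs n).le) hupper
  have hgsnorm : ∀ n, ‖WeakDual.toStrongDual (gs n)‖ ≤ C := by
    intro n
    have := (hgsK n).1
    simpa only [hBdef, Set.mem_preimage, Metric.mem_closedBall, dist_zero_right] using this
  have hnormdiff : ∀ n, ‖f n - WeakDual.toStrongDual (gs n)‖ ≤ 2*C := by
    intro n
    calc ‖f n - WeakDual.toStrongDual (gs n)‖ ≤ ‖f n‖ + ‖WeakDual.toStrongDual (gs n)‖ :=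
          norm_sub_le _ _
      _ ≤ 2*C := by have := hfC n; have := hgsnorm n; linarith
  have key : ∀ z : E, Tendsto (fun n => f n z - gs n z) atTop (𝓝 (0:ℝ)) := by
    intro z
    rw [Metric.tendsto_atTop]
    intro ε hε
    obtain ⟨k, hk⟩ := hu.exists_dist_lt z (show (0:ℝ) < ε/(4*C+1) by positivity)
    set δ : ℝ := min (ε/2) (1/2) with hδdef
    have hδpos : (0:ℝ) < δ := lt_min (by positivity) (by norm_num)
    have hδle : δ ≤ ε/2 := min_le_left _ _
    have hδle1 : δ ≤ 1/2 := min_le_right _ _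
    have hev := (hDgs0.eventually (gt_mem_nhds (show (0:ℝ) < (1/2:ℝ)^k * δ by positivity)))
    obtain ⟨N, hN⟩ := hev.exists_forall_of_atTop
    refine ⟨N, fun n hn => ?_⟩
    have hterm : (1/2:ℝ)^k * min |fw n (u k) - gs n (u k)| 1 ≤ D (fw n) (gs n) :=
      Summable.le_tsum (hDsummable _ _) k (fun j _ => hterm_nonneg _ _ _)
    have h1 : min |fw n (u k) - gs n (u k)| 1 < δ := by
      have h2 := lt_of_le_of_lt hterm (hN n hn)
      have h3 : (0:ℝ) < (1/2:ℝ)^k := by positivity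
      exact lt_of_mul_lt_mul_left h2 h3.le
    have h2 : |fw n (u k) - gs n (u k)| < δ := by
      rcases min_cases (|fw n (u k) - gs n (u k)|) 1 with ⟨heq, _⟩ | ⟨heq, _⟩
      · rwa [heq] at h1
      · rw [heq] at h1; linarith
    set φ : E →L[ℝ] ℝ := f n - WeakDual.toStrongDual (gs n) with hφdef
    have hφap : ∀ w : E, φ w = f n w - gs n w := by
      intro w
      rw [hφdef, ContinuousLinearMap.sub_apply]
      rfl
    have hφuk : φ (u k) = fw n (u k) - gs n (u k) := hφap (u k)
    have hφz : φ z = f n z - gs n z := hφap z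
    have hsplit : φ z = φ (u k) + φ (z - u k) := by
      rw [map_sub]; ring
    have hbound : |φ (z - u k)| ≤ 2*C * ‖z - u k‖ := by
      calc |φ (z - u k)| = ‖φ (z - u k)‖ := (Real.norm_eq_abs _).symm
        _ ≤ ‖φ‖ * ‖z - u k‖ := φ.le_opNorm _
        _ ≤ 2*C * ‖z - u k‖ := mul_le_mul_of_nonneg_right (hnormdiff n) (norm_nonneg _)
    have hzk : ‖z - u k‖ < ε/(4*C+1) := by
      rw [← dist_eq_norm]
      exact hk
    have h2' : |φ (u k)| < δ := by rw [hφuk]; exact h2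
    set t : ℝ := ε/(4*C+1) with htdef
    have ht0 : 0 ≤ t := by positivity
    have htε : ε = t*(4*C+1) := by
      rw [htdef, div_mul_cancel₀]
      positivity
    have h2C : (0:ℝ) < 2*C := by linarith
    have h5 : 2*C*‖z - u k‖ < 2*C*t := mul_lt_mul_of_pos_left hzk h2C
    have hb2 : |φ (z - u k)| < 2*C*t := lt_of_le_of_lt hbound h5
    have h9 : |φ z| ≤ |φ (u k)| + |φ (z - u k)| := by
      rw [hsplit]; exact abs_add_le _ _
    have hCt : (0:ℝ) ≤ C*t := mul_nonneg hC0.le ht0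
    have h10 : δ + 2*C*t ≤ ε := by
      rw [htε]
      linarith [hδle, htε]
    have hfinal : |φ z| < ε :=
      lt_of_le_of_lt h9 (lt_of_lt_of_le (add_lt_add h2' hb2) h10)
    rw [Real.dist_eq, _root_.sub_zero, ← hφz]
    exact hfinal
  -- construct Q
  refine ⟨LinearMap.mkContinuous
    { toFun := fun z => mkCzero (fun n => f n z - gs n z) (key z)
      map_add' := fun y z => by
        ext n
        simp only [mkCzero_apply, mkCzero_apply', ZeroAtInftyContinuousMap.coe_add, Pi.add_apply, map_add]
        ring
      map_smul' := fun c z => by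
        ext n
        simp only [mkCzero_apply, mkCzero_apply', ZeroAtInftyContinuousMap.coe_smul, Pi.smul_apply, map_smul,
          RingHom.id_apply]
        exact (smul_sub _ _ _).symm }
    (2*C) (fun z => ?_), fun x => ?_⟩
  · refine czero_norm_le _ (by positivity) (fun n => ?_)
    simp only [LinearMap.coe_mk, AddHom.coe_mk, mkCzero_apply]
    have h8 : f n z - gs n z = (f n - WeakDual.toStrongDual (gs n)) z := rfl
    rw [h8]
    calc |(f n - WeakDual.toStrongDual (gs n)) z|
        = ‖(f n - WeakDual.toStrongDual (gs n)) z‖ := (Real.norm_eq_abs _).symm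
      _ ≤ ‖f n - WeakDual.toStrongDual (gs n)‖ * ‖z‖ := ContinuousLinearMap.le_opNorm _ _
      _ ≤ 2*C*‖z‖ := by nlinarith [hnormdiff n, norm_nonneg z]
  · ext (n : ℕ)
    simp only [LinearMap.mkContinuous_apply, LinearMap.coe_mk, AddHom.coe_mk, mkCzero_apply, mkCzero_apply']
    rw [hf n x, hxs_apply, (hgsK n).2 x, _root_.sub_zero]

lemma omega1_eq_ord : omega1 = (Cardinal.aleph 1).ord := (Cardinal.ord_aleph 1).symm
lemma iSup_lt_omega1 (g : ℕ → Ordinal.{0}) (h : ∀ n, g n < omega1) : (⨆ n, g n) < omega1 := by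
  apply Ordinal.iSup_lt_ord _ h
  rw [omega1_eq_ord, Cardinal.isRegular_aleph_one.cof_eq]
  simpa using Cardinal.aleph0_lt_aleph_one
lemma omega1_isLimit : Order.IsSuccLimit (omega1 : Ordinal) := by
  rw [omega1_eq_ord]; exact Cardinal.isSuccLimit_ord (by simpa using Cardinal.aleph0_le_aleph 1)

lemma zero_lt_omega1 : (0 : Ordinal.{0}) < omega1 :=
  lt_of_lt_of_le Ordinal.omega0_pos (Ordinal.omega0_le_omega 1)

/-- Every continuous function on `[0, ω₁]` is eventually equal to its value at `ω₁`. -/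
lemma exists_threshold (f : CC) : ∃ β : Ordinal.{0}, β < omega1 ∧
    ∀ x : Set.Iic omega1, β ≤ x.1 → f x = f ⊤ := by
  have hnb : ∃ l : Set.Iic omega1, l < ⊤ := by
    refine ⟨⟨0, zero_lt_omega1.le⟩, ?_⟩
    rw [lt_top_iff_ne_top]
    intro h
    have : (0 : Ordinal.{0}) = omega1 := congrArg Subtype.val h
    exact absurd this.symm (ne_of_gt zero_lt_omega1)
  have hmem : ∀ n : ℕ, ∃ l : Set.Iic omega1, l < ⊤ ∧
      ∀ x : Set.Iic omega1, l < x → |f x - f ⊤| < 1/(n+1) := by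
    intro n
    have hU : f ⁻¹' (Metric.ball (f ⊤) (1/(n+1))) ∈ 𝓝 (⊤ : Set.Iic omega1) := by
      apply f.continuous.continuousAt.preimage_mem_nhds
      exact Metric.ball_mem_nhds _ (by positivity)
    obtain ⟨l, hl, hsub⟩ := exists_Ioc_subset_of_mem_nhds hU hnb
    refine ⟨l, hl, fun x hx => ?_⟩
    have hx2 : x ∈ Set.Ioc l ⊤ := ⟨hx, le_top⟩
    have := hsub hx2
    rw [Set.mem_preimage, Metric.mem_ball, Real.dist_eq] at this
    exact this
  choose l hl hprop using hmem
  have hsup : (⨆ n, (l n).1) < omega1 := iSup_lt_omega1 _ (fun n => lt_of_le_of_ne (l n).2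
    (fun h => absurd (Subtype.ext h : l n = ⊤) (ne_of_lt (hl n))))
  refine ⟨Order.succ (⨆ n, (l n).1), omega1_isLimit.succ_lt hsup, ?_⟩
  intro x hx
  have hfx : ∀ n : ℕ, |f x - f ⊤| < 1/(n+1) := by
    intro n
    apply hprop n
    have h1 : (l n).1 < x.1 := by
      have h2 : (l n).1 ≤ ⨆ n, (l n).1 :=
        le_ciSup (f := fun n => (l n).1) (Ordinal.bddAbove_range _) n
      exact lt_of_le_of_lt h2 (lt_of_lt_of_le (Order.lt_succ _) hx)
    exact Subtype.mk_lt_mk.2 h1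
  by_contra hne
  have habs : 0 < |f x - f ⊤| := abs_pos.2 (sub_ne_zero.2 hne)
  obtain ⟨n, hn⟩ := exists_nat_one_div_lt habs
  exact absurd (hfx n) (not_lt.2 hn.le)

lemma secondCountable_of_countable_orderTopology {γ : Type*} [LinearOrder γ] [TopologicalSpace γ]
    [OrderTopology γ] [Countable γ] : SecondCountableTopology γ := by
  refine ⟨⟨Set.range (Set.Ioi : γ → Set γ) ∪ Set.range (Set.Iio : γ → Set γ), ?_, ?_⟩⟩
  · exact (Set.countable_range _).union (Set.countable_range _)
  · rw [OrderTopology.topology_eq_generate_intervals (α := γ), Preorder.topology]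
    congr 1
    ext s
    simp only [Set.mem_setOf_eq, Set.mem_union, Set.mem_range]
    constructor
    · rintro ⟨a, h | h⟩
      · exact Or.inl ⟨a, h.symm⟩
      · exact Or.inr ⟨a, h.symm⟩
    · rintro (⟨a, h⟩ | ⟨a, h⟩)
      · exact ⟨a, Or.inl h.symm⟩
      · exact ⟨a, Or.inr h.symm⟩

section Retr
variable (a : Set.Iic omega1)

instance : CompactSpace (Set.Iic a) :=
  isCompact_iff_compactSpace.mp (isClosed_Iic.isCompact)

lemma countable_Iic_sub (ha : a.1 < omega1) : Countable (Set.Iic a) := by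
  have h1 : (Set.Iic a.1).Countable := by
    rw [← Order.Iio_succ, Cardinal.countable_iff_lt_aleph_one, Ordinal.mk_Iio_ordinal,
      Cardinal.lift_lt_aleph_one, ← Cardinal.lt_ord, Cardinal.ord_aleph]
    exact omega1_isLimit.succ_lt ha
  have h2 : (Set.Iic a).Countable := by
    have : Set.Iic a = (Subtype.val : Set.Iic omega1 → Ordinal) ⁻¹' (Set.Iic a.1) := by
      ext x; rfl
    rw [this]
    exact h1.preimage Subtype.val_injective
  exact h2.to_subtype

/-- retraction `x ↦ min x a` -/
def retr : C(Set.Iic omega1, Set.Iic omega1) :=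
  ⟨fun x => min x a, continuous_id.min continuous_const⟩

/-- the projection `f ↦ f ∘ retr` -/
def P0 : CC →L[ℝ] CC :=
  LinearMap.mkContinuous
    { toFun := fun f => f.comp (retr a)
      map_add' := fun f g => rfl
      map_smul' := fun c f => rfl }
    1 (fun f => by
      rw [one_mul]
      refine (ContinuousMap.norm_le _ (norm_nonneg f)).2 (fun x => ?_)
      exact f.norm_coe_le_norm ((retr a) x))

lemma P0_apply (f : CC) (x : Set.Iic omega1) : P0 a f x = f (min x a) := rfl

lemma P0_eq_self_of (f : CC) (hf : ∀ x : Set.Iic omega1, a.1 ≤ x.1 → f x = f ⊤) :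
    P0 a f = f := by
  ext x
  rw [P0_apply]
  rcases le_total x a with h | h
  · rw [min_eq_left h]
  · rw [min_eq_right h]
    rw [hf a le_rfl, hf x h]

/-- extension map from `C([0,a])` -/
def extMap : C(Set.Iic a, ℝ) → CC := fun g =>
  g.comp ⟨fun x => ⟨min x a, Set.mem_Iic.2 (min_le_right _ _)⟩,
    Continuous.subtype_mk (continuous_id.min continuous_const) _⟩

lemma extMap_in_range (g : C(Set.Iic a, ℝ)) : P0 a (extMap a g) = extMap a g := by
  ext x
  rw [P0_apply]
  have hmm : min (min x a) a = min x a := min_eq_left (min_le_right _ _)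
  show g ⟨min (min x a) a, Set.mem_Iic.2 (min_le_right _ _)⟩
      = g ⟨min x a, Set.mem_Iic.2 (min_le_right _ _)⟩
  congr 1
  exact Subtype.ext hmm
end Retr

section RangeSep
variable (a : Set.Iic omega1)

/-- restriction map -/
def restrMap : CC → C(Set.Iic a, ℝ) := fun f =>
  f.comp ⟨Subtype.val, continuous_subtype_val⟩

lemma extMap_restr (f : CC) : extMap a (restrMap a f) = P0 a f := rfl

lemma sep_range_P0 (ha : a.1 < omega1) :
    SeparableSpace (LinearMap.range (P0 a : CC →ₗ[ℝ] CC) : Submodule ℝ CC) := by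
  haveI := countable_Iic_sub a ha
  haveI : SecondCountableTopology (Set.Iic a) := secondCountable_of_countable_orderTopology
  haveI : SeparableSpace C(Set.Iic a, ℝ) := inferInstance
  have hmem : ∀ g : C(Set.Iic a, ℝ), extMap a g ∈ LinearMap.range (P0 a : CC →ₗ[ℝ] CC) :=
    fun g => ⟨extMap a g, extMap_in_range a g⟩
  set Φ : C(Set.Iic a, ℝ) → (LinearMap.range (P0 a : CC →ₗ[ℝ] CC) : Submodule ℝ CC) :=
    fun g => ⟨extMap a g, hmem g⟩ with hΦdef
  have hΦcont : Continuous Φ := by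
    refine Continuous.subtype_mk ?_ _
    refine LipschitzWith.continuous (K := 1) ?_
    refine LipschitzWith.of_dist_le_mul (fun g h => ?_)
    rw [NNReal.coe_one, one_mul]
    refine (ContinuousMap.dist_le dist_nonneg).2 (fun x => ?_)
    exact ContinuousMap.dist_apply_le_dist (⟨min x a, Set.mem_Iic.2 (min_le_right _ _)⟩ : Set.Iic a)
  have hΦsurj : Function.Surjective Φ := by
    rintro ⟨f, hf⟩
    obtain ⟨h, rfl⟩ := hf
    refine ⟨restrMap a (P0 a h), ?_⟩
    apply Subtype.ext
    show extMap a (restrMap a (P0 a h)) = P0 a h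
    rw [extMap_restr]
    have : P0 a h = extMap a (restrMap a h) := (extMap_restr a h).symm
    rw [this, extMap_in_range]
  exact (hΦsurj.denseRange).separableSpace hΦcont
end RangeSep

/-- Every closed subspace of `C([0,ω₁])` isomorphic to `c₀` is complemented in `C([0,ω₁])`. -/
theorem c0_subspace_complemented (X : Submodule ℝ CC) (hX : IsClosed (X : Set CC))
    (hiso : Nonempty (X ≃L[ℝ] czero ℕ)) :
    ∃ P : CC →L[ℝ] CC, P.comp P = P ∧ LinearMap.range (P : CC →ₗ[ℝ] CC) = X := by
  classical
  obtain ⟨T⟩ := hiso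
  haveI : SeparableSpace X :=
    (T.symm.surjective.denseRange).separableSpace T.symm.continuous
  haveI : Nonempty X := ⟨0⟩
  set ds : ℕ → X := denseSeq X with hdsdef
  have hds : DenseRange ds := denseRange_denseSeq X
  choose β hβ hβprop using fun k => exists_threshold ((ds k : CC))
  set α0 : Ordinal.{0} := ⨆ k, β k with hα0def
  have hα0 : α0 < omega1 := iSup_lt_omega1 _ hβ
  set a : Set.Iic omega1 := ⟨α0, hα0.le⟩ with hadef
  -- all elements of X are constant past a
  have hXconst : ∀ f ∈ X, ∀ x : Set.Iic omega1, a.1 ≤ x.1 → f x = f ⊤ := by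
    intro f hf x hx
    have hds_const : ∀ k : ℕ, ∀ y : Set.Iic omega1, a.1 ≤ y.1 → (ds k : CC) y = (ds k : CC) ⊤ := by
      intro k y hy
      apply hβprop k
      exact le_trans (le_ciSup (f := β) (Ordinal.bddAbove_range _) k) hy
    by_contra hne
    set c : ℝ := |f x - f ⊤| with hcdef
    have hc : 0 < c := abs_pos.2 (sub_ne_zero.2 hne)
    obtain ⟨k, hk⟩ := hds.exists_dist_lt (⟨f, hf⟩ : X) (show (0:ℝ) < c/4 by linarith)
    have hdist : dist ((ds k : CC)) f < c/4 := by
      have h0 := hk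
      rw [Subtype.dist_eq] at h0
      rwa [dist_comm] at h0
    have hptx : ∀ y : Set.Iic omega1, |f y - (ds k : CC) y| ≤ dist ((ds k : CC)) f := by
      intro y
      have h1 : |(f - (ds k : CC)) y| ≤ ‖f - (ds k : CC)‖ := by
        rw [← Real.norm_eq_abs]
        exact ContinuousMap.norm_coe_le_norm _ _
      rw [ContinuousMap.sub_apply] at h1
      rwa [dist_comm, dist_eq_norm]
    have h2 := hptx x
    have h3 := hptx ⊤
    have h4 : (ds k : CC) x = (ds k : CC) ⊤ := hds_const k x hx
    have h5 : |f x - f ⊤| ≤ |f x - (ds k : CC) x| + |(ds k : CC) x - f ⊤| := abs_sub_le _ _ _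
    have h6 : |(ds k : CC) x - f ⊤| = |f ⊤ - (ds k : CC) ⊤| := by
      rw [h4, abs_sub_comm]
    rw [hcdef] at hc
    linarith
  have hXfix : ∀ f ∈ X, P0 a f = f := fun f hf => P0_eq_self_of a f (hXconst f hf)
  set Z : Submodule ℝ CC := LinearMap.range (P0 a : CC →ₗ[ℝ] CC) with hZdef
  have hXZ : X ≤ Z := fun f hf => ⟨f, hXfix f hf⟩
  haveI : SeparableSpace Z := sep_range_P0 a hα0
  set X' : Submodule ℝ Z := X.comap Z.subtype with hX'def
  -- the continuous linear equivalence X' ≃L X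
  set eXZ : X' ≃L[ℝ] X :=
    { toFun := fun x => ⟨x.1.1, x.2⟩
      map_add' := fun x y => rfl
      map_smul' := fun c x => rfl
      invFun := fun x => ⟨⟨x.1, hXZ x.2⟩, x.2⟩
      left_inv := fun x => rfl
      right_inv := fun x => rfl
      continuous_toFun := Continuous.subtype_mk (continuous_subtype_val.comp continuous_subtype_val) _
      continuous_invFun := Continuous.subtype_mk (Continuous.subtype_mk continuous_subtype_val _) _ }
    with heXZdef
  obtain ⟨Q, hQ⟩ := sobczyk_ext (E := Z) X' (eXZ.trans T)
  set ρ : CC →L[ℝ] Z := (P0 a).codRestrict Z (fun f => LinearMap.mem_range_self _ f) with hρdef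
  set P : CC →L[ℝ] CC :=
    X.subtypeL.comp ((T.symm.toContinuousLinearMap).comp (Q.comp ρ)) with hPdef
  have hPX : ∀ f : CC, P f ∈ X := fun f => (T.symm (Q (ρ f))).2
  have hPx : ∀ f ∈ X, P f = f := by
    intro f hf
    have hρf : ρ f = (⟨f, hXZ hf⟩ : Z) := by
      apply Subtype.ext
      show P0 a f = f
      exact hXfix f hf
    set x' : X' := ⟨⟨f, hXZ hf⟩, hf⟩ with hx'def
    have hQx : Q (ρ f) = T ⟨f, hf⟩ := by
      rw [hρf]
      have := hQ x'
      rw [this]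
      rfl
    show X.subtypeL (T.symm (Q (ρ f))) = f
    rw [hQx]
    rw [ContinuousLinearEquiv.symm_apply_apply]
    rfl
  refine ⟨P, ?_, ?_⟩
  · refine ContinuousLinearMap.ext fun f => ?_
    show P (P f) = P f
    exact hPx (P f) (hPX f)
  · apply le_antisymm
    · rintro y ⟨f, rfl⟩
      exact hPX f
    · intro y hy
      exact ⟨y, hPx y hy⟩
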